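/- Let (w_k)_{k∈ℕ} be a sequence of points with Im w_k ≥ 0 and ⟨K_{w_k}, K_{w_k}⟩ > 0 for all k, and set ∇(w) := ‖K_w‖_H. If lim_{k→∞} m_E(w_k)/∇(w_k) = 0, then there exist a strictly increasing map σ : ℕ → ℕ and constants 0 < c ≤ C such that the normalized kernels K̃_{w_{σ(n)}} := K_{w_{σ(n)}}/‖K_{w_{σ(n)}}‖_H form a Riesz sequence in H: for every finitely supported sequence (a_n) of complex numbers, c·∑_n |a_n|² ≤ ‖∑_n a_n·K̃_{w_{σ(n)}}‖_H² ≤ C·∑_n |a_n|². -/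

import Mathlib

open Complex Filter Topology

open scoped InnerProductSpace

lemma geom_quarter_bound (s : Finset ℕ) : ∑ n ∈ s, ((1:ℝ)/4)^n ≤ 4/3 := by
  classical
  obtain ⟨N, hN⟩ : ∃ N, s ⊆ Finset.range N := ⟨s.sup id + 1, fun x hx =>
    Finset.mem_range.mpr (Nat.lt_succ_of_le (Finset.le_sup (f := id) hx))⟩
  calc ∑ n ∈ s, ((1:ℝ)/4)^n ≤ ∑ n ∈ Finset.range N, ((1:ℝ)/4)^n :=
        Finset.sum_le_sum_of_subset_of_nonneg hN (fun i _ _ => by positivity)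
    _ ≤ 4/3 := by
        rw [geom_sum_eq (by norm_num)]
        have : (0:ℝ) ≤ ((1:ℝ)/4)^N := by positivity
        rw [div_le_iff_of_neg (by norm_num)]
        nlinarith

lemma riesz_of_almost_orthogonal {H : Type*} [NormedAddCommGroup H] [InnerProductSpace ℂ H]
    (v : ℕ → H) (hv : ∀ n, ‖v n‖ = 1)
    (hg : ∀ n m, n ≠ m → ‖(⟪v n, v m⟫_ℂ : ℂ)‖ ≤ (1/4)*(1/2)^n*(1/2)^m)
    (s : Finset ℕ) (a : ℕ → ℂ) :
    (2/3) * ∑ n ∈ s, (‖a n‖)^2 ≤ ‖∑ n ∈ s, a n • v n‖^2 ∧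
    ‖∑ n ∈ s, a n • v n‖^2 ≤ (4/3) * ∑ n ∈ s, (‖a n‖)^2 := by
  classical
  set x := ∑ n ∈ s, a n • v n with hx
  set S := ∑ n ∈ s, (‖a n‖)^2 with hS
  have hSnn : 0 ≤ S := Finset.sum_nonneg fun i _ => by positivity
  have hinner : (⟪x, x⟫_ℂ : ℂ) =
      ∑ n ∈ s, ∑ m ∈ s, (starRingEnd ℂ) (a n) * a m * ⟪v n, v m⟫_ℂ := by
    rw [hx, sum_inner]
    refine Finset.sum_congr rfl fun n _ => ?_
    rw [inner_sum]
    refine Finset.sum_congr rfl fun m _ => ?_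
    rw [inner_smul_left, inner_smul_right]; ring
  have hsplit : (⟪x, x⟫_ℂ : ℂ) = (S : ℂ) +
      ∑ n ∈ s, ∑ m ∈ s.erase n, (starRingEnd ℂ) (a n) * a m * ⟪v n, v m⟫_ℂ := by
    rw [hinner]
    have : ∀ n ∈ s, ∑ m ∈ s, (starRingEnd ℂ) (a n) * a m * ⟪v n, v m⟫_ℂ
        = ((‖a n‖)^2 : ℂ) + ∑ m ∈ s.erase n, (starRingEnd ℂ) (a n) * a m * ⟪v n, v m⟫_ℂ := by
      intro n hn
      rw [← Finset.add_sum_erase s _ hn]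
      congr 1
      have h1 : (⟪v n, v n⟫_ℂ : ℂ) = 1 := by
        rw [inner_self_eq_norm_sq_to_K, hv n]; norm_num
      rw [h1, mul_one, mul_comm, Complex.mul_conj]
      norm_cast
      rw [Complex.sq_norm]
    rw [Finset.sum_congr rfl this, Finset.sum_add_distrib]
    congr 1
    rw [hS]; push_cast; ring
  set R := ∑ n ∈ s, ∑ m ∈ s.erase n, (starRingEnd ℂ) (a n) * a m * ⟪v n, v m⟫_ℂ with hR
  have hRbound : ‖R‖ ≤ S / 3 := by
    have h1 : ‖R‖ ≤ ∑ n ∈ s, ∑ m ∈ s.erase n,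
        ‖a n‖ * ‖a m‖ * ((1/4)*(1/2)^n*(1/2)^m) := by
      refine (norm_sum_le _ _).trans (Finset.sum_le_sum fun n hn => ?_)
      refine (norm_sum_le _ _).trans (Finset.sum_le_sum fun m hm => ?_)
      rw [norm_mul, norm_mul]
      have hnm : n ≠ m := (Finset.ne_of_mem_erase hm).symm
      have h2 : ‖(starRingEnd ℂ) (a n)‖ = ‖a n‖ := RCLike.norm_conj _
      have h3 : ‖a m‖ = ‖a m‖ := rfl
      rw [h2, h3]
      exact mul_le_mul_of_nonneg_left (hg n m hnm) (by positivity)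
    have h2 : ∑ n ∈ s, ∑ m ∈ s.erase n,
        ‖a n‖ * ‖a m‖ * ((1/4)*(1/2)^n*(1/2)^m)
        ≤ (1/4) * (∑ n ∈ s, ‖a n‖ * (1/2)^n)^2 := by
      have h3 : ∀ n ∈ s, ∑ m ∈ s.erase n,
          ‖a n‖ * ‖a m‖ * ((1/4)*(1/2)^n*(1/2)^m)
          ≤ ∑ m ∈ s, (1/4) * (‖a n‖ * (1/2)^n) * (‖a m‖ * (1/2)^m) := by
        intro n hn
        refine (Finset.sum_le_sum_of_subset_of_nonneg (s.erase_subset n)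
          (fun i _ _ => by positivity)).trans_eq ?_
        exact Finset.sum_congr rfl fun m _ => by ring
      refine (Finset.sum_le_sum h3).trans_eq ?_
      rw [sq, Finset.sum_mul_sum]
      simp only [Finset.mul_sum]
      exact Finset.sum_congr rfl fun n _ => Finset.sum_congr rfl fun m _ => by ring
    have h4 : (∑ n ∈ s, ‖a n‖ * (1/2)^n)^2 ≤ S * (4/3) := by
      have hcs := Finset.sum_mul_sq_le_sq_mul_sq s (fun n => ‖a n‖) (fun n => (1/2)^n)
      have h5 : ∑ n ∈ s, (((1:ℝ)/2)^n)^2 = ∑ n ∈ s, ((1:ℝ)/4)^n := by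
        refine Finset.sum_congr rfl fun n _ => ?_
        rw [← pow_mul, mul_comm, pow_mul]; norm_num
      rw [h5] at hcs
      calc (∑ n ∈ s, ‖a n‖ * (1/2)^n)^2
          ≤ (∑ n ∈ s, ‖a n‖^2) * ∑ n ∈ s, ((1:ℝ)/4)^n := hcs
        _ ≤ S * (4/3) := mul_le_mul_of_nonneg_left (geom_quarter_bound s) hSnn
    calc ‖R‖ ≤ (1/4) * (∑ n ∈ s, ‖a n‖ * (1/2)^n)^2 := h1.trans h2
      _ ≤ (1/4) * (S * (4/3)) := by linarith
      _ = S / 3 := by ring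
  have hre : ‖x‖^2 = S + R.re := by
    have := inner_self_eq_norm_sq (𝕜 := ℂ) x
    rw [hsplit] at this
    simp only [RCLike.re_to_complex, Complex.add_re, Complex.ofReal_re] at this
    linarith [this]
  have habs : |R.re| ≤ S / 3 := (Complex.abs_re_le_norm R).trans hRbound
  constructor
  · rw [hre]; rw [abs_le] at habs; linarith
  · rw [hre]; rw [abs_le] at habs; linarith

noncomputable section

/-- **Statement 11.** If `m_E(w_k)/∇(w_k) → 0`, then some subsequence of the normalized
reproducing kernels is a Riesz sequence in `H`. -/
theorem riesz_sequence_of_kernels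
    {H : Type*} [NormedAddCommGroup H] [InnerProductSpace ℂ H] [CompleteSpace H]
    (ev : H →ₗ[ℂ] (ℂ → ℂ)) (hinj : Function.Injective ev)
    (hentire : ∀ F : H, Differentiable ℂ (ev F))
    (E : ℂ → ℂ) (hE : Differentiable ℂ E)
    (hHB : ∀ z : ℂ, 0 < z.im → ‖E ((starRingEnd ℂ) z)‖ < ‖E z‖)
    (K : ℂ → H)
    (hKform : ∀ w z : ℂ, z ≠ (starRingEnd ℂ) w →
      ev (K w) z = (E z * (starRingEnd ℂ) (E w) -
          (starRingEnd ℂ) (E ((starRingEnd ℂ) z)) * E ((starRingEnd ℂ) w)) /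
        (2 * (Real.pi : ℂ) * Complex.I * ((starRingEnd ℂ) w - z)))
    (hrepro : ∀ (F : H) (w : ℂ), ⟪K w, F⟫_ℂ = ev F w)
    (w : ℕ → ℂ) (hw : ∀ k, 0 ≤ (w k).im)
    (hpos : ∀ k, 0 < ‖K (w k)‖)
    (hlim : Filter.Tendsto
      (fun k => (‖E (w k)‖ / ‖w k + Complex.I‖) / ‖K (w k)‖)
      Filter.atTop (nhds 0)) :
    ∃ σ : ℕ → ℕ, StrictMono σ ∧ ∃ c C : ℝ, 0 < c ∧ c ≤ C ∧
      ∀ (s : Finset ℕ) (a : ℕ → ℂ),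
        c * ∑ n ∈ s, (‖a n‖) ^ 2 ≤
            ‖∑ n ∈ s, a n • ((‖K (w (σ n))‖ : ℂ)⁻¹ • K (w (σ n)))‖ ^ 2 ∧
          ‖∑ n ∈ s, a n • ((‖K (w (σ n))‖ : ℂ)⁻¹ • K (w (σ n)))‖ ^ 2 ≤
            C * ∑ n ∈ s, (‖a n‖) ^ 2 := by
  classical
  have hpi : (0:ℝ) < Real.pi := Real.pi_pos
  set kt : ℕ → H := fun k => (‖K (w k)‖ : ℂ)⁻¹ • K (w k) with hkt
  have hktnorm : ∀ k, ‖kt k‖ = 1 := by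
    intro k
    rw [hkt]
    simp only [norm_smul, norm_inv, Complex.norm_real, Real.norm_eq_abs,
      abs_of_pos (hpos k)]
    exact inv_mul_cancel₀ (hpos k).ne'
  -- |E(conj z)| ≤ |E z| on the closed upper half plane
  have ebound : ∀ z : ℂ, 0 ≤ z.im → ‖E ((starRingEnd ℂ) z)‖ ≤ ‖E z‖ := by
    intro z hz
    rcases eq_or_lt_of_le hz with h | h
    · rw [Complex.conj_eq_iff_im.mpr h.symm]
    · exact (hHB z h).le
  -- kernel growth bound
  have hKb : ∀ u : ℂ, 0 < u.im → ∃ Cu : ℝ, 0 ≤ Cu ∧ ∀ z : ℂ, 0 ≤ z.im →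
      ‖ev (K u) z‖ ≤ Cu * (‖E z‖ / ‖z + Complex.I‖) := by
    intro u hu
    set c := (starRingEnd ℂ) u with hc
    set B := ‖E u‖ + ‖E c‖ with hB
    set M := 1 + ‖c + Complex.I‖ / u.im with hM
    have hBnn : 0 ≤ B := by positivity
    have hMpos : (0:ℝ) < M := by
      rw [hM]; positivity
    refine ⟨B * M / (2 * Real.pi), by positivity, ?_⟩
    intro z hz
    have hcim : c.im = -u.im := by rw [hc]; simp
    have hne : z ≠ c := by
      intro h
      rw [h] at hz
      rw [hcim] at hz
      linarith
    rw [hKform u z hne]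
    rw [norm_div]
    have hdenom : ‖2 * (Real.pi:ℂ) * Complex.I * (c - z)‖ =
        2 * Real.pi * ‖c - z‖ := by
      simp [Complex.norm_real, abs_of_pos hpi, mul_assoc]
    set d := ‖c - z‖ with hd
    have hdim : u.im + z.im ≤ d := by
      have h1 : |(c - z).im| ≤ d := Complex.abs_im_le_norm _
      have h2 : (c - z).im = -u.im - z.im := by rw [Complex.sub_im, hcim]
      rw [h2, abs_of_nonpos (by linarith)] at h1
      linarith
    have hdpos : 0 < d := lt_of_lt_of_le (by linarith) hdim
    have hzI : 0 < ‖z + Complex.I‖ := by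
      rw [norm_pos_iff]
      intro h
      have : (z + Complex.I).im = 0 := by rw [h]; simp
      rw [Complex.add_im, Complex.I_im] at this
      linarith
    have hnum : ‖E z * (starRingEnd ℂ) (E u) -
        (starRingEnd ℂ) (E ((starRingEnd ℂ) z)) * E c‖ ≤ ‖E z‖ * B := by
      calc ‖E z * (starRingEnd ℂ) (E u) -
            (starRingEnd ℂ) (E ((starRingEnd ℂ) z)) * E c‖
          ≤ ‖E z * (starRingEnd ℂ) (E u)‖ +
            ‖(starRingEnd ℂ) (E ((starRingEnd ℂ) z)) * E c‖ := by
            have := norm_add_le (E z * (starRingEnd ℂ) (E u))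
              (-((starRingEnd ℂ) (E ((starRingEnd ℂ) z)) * E c))
            simpa [sub_eq_add_neg] using this
        _ = ‖E z‖ * ‖E u‖ +
            ‖E ((starRingEnd ℂ) z)‖ * ‖E c‖ := by
            simp [norm_mul, RCLike.norm_conj]
        _ ≤ ‖E z‖ * ‖E u‖ +
            ‖E z‖ * ‖E c‖ := by
            have := ebound z hz
            have h0 : (0:ℝ) ≤ ‖E c‖ := norm_nonneg _
            nlinarith
        _ = ‖E z‖ * B := by rw [hB]; ring
    have hzId : ‖z + Complex.I‖ ≤ M * d := by
      have h1 : ‖z + Complex.I‖ ≤ d + ‖c + Complex.I‖ := by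
        have he : z + Complex.I = (z - c) + (c + Complex.I) := by ring
        rw [he]
        refine (norm_add_le _ _).trans ?_
        have : ‖z - c‖ = d := by rw [hd, norm_sub_rev]
        rw [this]
      have h2 : ‖c + Complex.I‖ ≤ (‖c + Complex.I‖ / u.im) * d := by
        rw [div_mul_eq_mul_div, le_div_iff₀ hu]
        have h3 : u.im ≤ d := le_trans (by linarith) hdim
        nlinarith [norm_nonneg (c + Complex.I)]
      calc ‖z + Complex.I‖ ≤ d + ‖c + Complex.I‖ := h1
        _ ≤ d + (‖c + Complex.I‖ / u.im) * d := by linarith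
        _ = M * d := by rw [hM]; ring
    rw [hdenom]
    have hrhs : B * M / (2 * Real.pi) * (‖E z‖ / ‖z + Complex.I‖)
        = (B * M * ‖E z‖) / (2 * Real.pi * ‖z + Complex.I‖) := by
      ring
    rw [hrhs, div_le_div_iff₀ (by positivity) (by positivity)]
    calc ‖E z * (starRingEnd ℂ) (E u) -
          (starRingEnd ℂ) (E ((starRingEnd ℂ) z)) * E c‖ * (2 * Real.pi * ‖z + Complex.I‖)
        ≤ (‖E z‖ * B) * (2 * Real.pi * ‖z + Complex.I‖) := by
          exact mul_le_mul_of_nonneg_right hnum (by positivity)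
      _ ≤ (‖E z‖ * B) * (2 * Real.pi * (M * d)) := by
          have h0 : (0:ℝ) ≤ ‖E z‖ * B := by positivity
          have h1 : 2 * Real.pi * ‖z + Complex.I‖ ≤ 2 * Real.pi * (M * d) :=
            mul_le_mul_of_nonneg_left hzId (by positivity)
          exact mul_le_mul_of_nonneg_left h1 h0
      _ = B * M * ‖E z‖ * (2 * Real.pi * d) := by ring
  -- weak convergence against kernels with Im u > 0
  have hweakS : ∀ u : ℂ, 0 < u.im →
      Tendsto (fun k => (⟪kt k, K u⟫_ℂ : ℂ)) atTop (𝓝 0) := by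
    intro u hu
    obtain ⟨Cu, hCu, hCb⟩ := hKb u hu
    apply squeeze_zero_norm (a := fun k =>
      Cu * ((‖E (w k)‖ / ‖w k + Complex.I‖) / ‖K (w k)‖))
    · intro k
      have h1 : (⟪kt k, K u⟫_ℂ : ℂ) = ((‖K (w k)‖:ℂ))⁻¹ * ev (K u) (w k) := by
        rw [hkt]
        simp only [inner_smul_left, map_inv₀, Complex.conj_ofReal]
        rw [hrepro]
      rw [h1, norm_mul]
      have h2 : ‖((‖K (w k)‖:ℂ))⁻¹‖ = (‖K (w k)‖)⁻¹ := by
        rw [norm_inv, Complex.norm_real, Real.norm_eq_abs, abs_of_pos (hpos k)]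
      rw [h2]
      have h3 := hCb (w k) (hw k)
      calc (‖K (w k)‖)⁻¹ * ‖ev (K u) (w k)‖
          ≤ (‖K (w k)‖)⁻¹ * (Cu * (‖E (w k)‖ / ‖w k + Complex.I‖)) :=
            mul_le_mul_of_nonneg_left h3 (inv_nonneg.mpr (norm_nonneg _))
        _ = Cu * ((‖E (w k)‖ / ‖w k + Complex.I‖) / ‖K (w k)‖) := by
            ring
    · simpa using hlim.const_mul Cu
  -- density of span of kernels with Im u > 0
  set Sset : Set H := {x | ∃ u : ℂ, 0 < u.im ∧ x = K u} with hSset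
  have hdense : (Submodule.span ℂ Sset).topologicalClosure = ⊤ := by
    rw [Submodule.topologicalClosure_eq_top_iff]
    rw [Submodule.eq_bot_iff]
    intro F hF
    have hv : ∀ u : ℂ, 0 < u.im → ev F u = 0 := by
      intro u hu
      have hm : K u ∈ Submodule.span ℂ Sset := Submodule.subset_span ⟨u, hu, rfl⟩
      have := (Submodule.mem_orthogonal _ F).mp hF (K u) hm
      rw [hrepro] at this
      exact this
    have hzero : ev F = 0 := by
      have han : AnalyticOnNhd ℂ (ev F) Set.univ := (hentire F).differentiableOn.analyticOnNhd isOpen_univ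
      have hopen : IsOpen {z : ℂ | 0 < z.im} := isOpen_lt continuous_const Complex.continuous_im
      have hmem : Complex.I ∈ {z : ℂ | 0 < z.im} := by simp
      have heq : (ev F) =ᶠ[𝓝 Complex.I] 0 := by
        filter_upwards [hopen.mem_nhds hmem] with z hz using hv z hz
      have := han.eqOn_zero_of_preconnected_of_eventuallyEq_zero isPreconnected_univ
        (Set.mem_univ Complex.I) heq
      funext z
      exact this (Set.mem_univ z)
    apply hinj
    rw [hzero, map_zero]
  -- weak convergence against everything
  have hweak : ∀ F : H, Tendsto (fun k => (⟪kt k, F⟫_ℂ : ℂ)) atTop (𝓝 0) := by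
    have hspan : ∀ G ∈ Submodule.span ℂ Sset,
        Tendsto (fun k => (⟪kt k, G⟫_ℂ : ℂ)) atTop (𝓝 0) := by
      intro G hG
      induction hG using Submodule.span_induction with
      | mem x hx => obtain ⟨u, hu, rfl⟩ := hx; exact hweakS u hu
      | zero => simpa using (tendsto_const_nhds : Tendsto (fun _ : ℕ => (0:ℂ)) atTop (𝓝 0))
      | add x y hx hy ihx ihy => simpa [inner_add_right] using ihx.add ihy
      | smul a x hx ih => simpa [inner_smul_right] using ih.const_mul a
    intro F
    rw [NormedAddCommGroup.tendsto_nhds_zero]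
    intro ε hε
    have hFc : F ∈ closure ((Submodule.span ℂ Sset : Submodule ℂ H) : Set H) := by
      have h1 : F ∈ (Submodule.span ℂ Sset).topologicalClosure := by
        rw [hdense]; trivial
      rwa [← SetLike.mem_coe, Submodule.topologicalClosure_coe] at h1
    obtain ⟨G, hG, hdist⟩ := Metric.mem_closure_iff.mp hFc (ε/2) (by positivity)
    have h2 := (NormedAddCommGroup.tendsto_nhds_zero.mp (hspan G hG)) (ε/2) (by positivity)
    filter_upwards [h2] with k hk
    have hsp : (⟪kt k, F⟫_ℂ : ℂ) = ⟪kt k, G⟫_ℂ + ⟪kt k, F - G⟫_ℂ := by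
      rw [← inner_add_right]
      congr 1
      exact (add_sub_cancel G F).symm
    rw [hsp]
    calc ‖(⟪kt k, G⟫_ℂ : ℂ) + ⟪kt k, F - G⟫_ℂ‖
        ≤ ‖(⟪kt k, G⟫_ℂ : ℂ)‖ + ‖(⟪kt k, F - G⟫_ℂ : ℂ)‖ := norm_add_le _ _
      _ ≤ ε/2 + ‖kt k‖ * ‖F - G‖ := add_le_add hk.le (norm_inner_le_norm _ _)
      _ = ε/2 + ‖F - G‖ := by rw [hktnorm k, one_mul]
      _ < ε := by
          have : ‖F - G‖ = dist F G := (dist_eq_norm F G).symm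
          rw [this]
          linarith
  -- extraction step
  have hstep : ∀ (N : ℕ) (δ : ℝ), 0 < δ → ∃ m, N < m ∧
      ∀ j ≤ N, ‖(⟪kt m, kt j⟫_ℂ : ℂ)‖ < δ := by
    intro N δ hδ
    have h1 : ∀ j : ℕ, ∀ᶠ m in atTop, ‖(⟪kt m, kt j⟫_ℂ : ℂ)‖ < δ := by
      intro j
      have h0 : Tendsto (fun m => ‖(⟪kt m, kt j⟫_ℂ : ℂ)‖) atTop (𝓝 0) := by
        simpa using (hweak (kt j)).norm
      exact h0.eventually_lt_const hδ
    have h2 : ∀ᶠ m in atTop, ∀ j ∈ Finset.range (N+1), ‖(⟪kt m, kt j⟫_ℂ : ℂ)‖ < δ :=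
      (Filter.eventually_all_finset _).mpr (fun j _ => h1 j)
    obtain ⟨m, hm⟩ := (h2.and (eventually_gt_atTop N)).exists
    exact ⟨m, hm.2, fun j hj => hm.1 j (Finset.mem_range.mpr (Nat.lt_succ_of_le hj))⟩
  -- construct the subsequence
  let σ : ℕ → ℕ := fun n => Nat.rec (motive := fun _ => ℕ) 0
    (fun n ih => (hstep ih ((1/4) * (1/4)^(n+1)) (by positivity)).choose) n
  have hprop : ∀ n : ℕ, σ n < σ (n+1) ∧
      ∀ j ≤ σ n, ‖(⟪kt (σ (n+1)), kt j⟫_ℂ : ℂ)‖ < (1/4) * (1/4)^(n+1) := by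
    intro n
    exact (hstep (σ n) ((1/4) * (1/4)^(n+1)) (by positivity)).choose_spec
  have hmono : StrictMono σ := strictMono_nat_of_lt_succ fun n => (hprop n).1
  have hg : ∀ n m, n ≠ m →
      ‖(⟪kt (σ n), kt (σ m)⟫_ℂ : ℂ)‖ ≤ (1/4)*(1/2)^n*(1/2)^m := by
    have key : ∀ n m, m < n →
        ‖(⟪kt (σ n), kt (σ m)⟫_ℂ : ℂ)‖ ≤ (1/4)*(1/2)^n*(1/2)^m := by
      intro n m hmn
      obtain ⟨p, rfl⟩ : ∃ p, n = p + 1 := ⟨n - 1, by omega⟩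
      have hj : σ m ≤ σ p := hmono.monotone (Nat.lt_succ_iff.mp hmn)
      refine ((hprop p).2 (σ m) hj).le.trans ?_
      have h1 : ((1:ℝ)/4)^(p+1) = (1/2)^(p+1)*(1/2)^(p+1) := by
        rw [← mul_pow]; norm_num
      rw [h1]
      have h2 : ((1:ℝ)/2)^(p+1) ≤ (1/2)^m :=
        pow_le_pow_of_le_one (by norm_num) (by norm_num) (by omega)
      have h3 : (0:ℝ) ≤ (1/2)^(p+1) := by positivity
      nlinarith
    intro n m hnm
    rcases lt_or_gt_of_ne hnm with h | h
    · have h1 := key m n h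
      rw [norm_inner_symm] at h1
      calc ‖(⟪kt (σ n), kt (σ m)⟫_ℂ : ℂ)‖ ≤ (1/4)*(1/2)^m*(1/2)^n := h1
        _ = (1/4)*(1/2)^n*(1/2)^m := by ring
    · exact key n m h
  refine ⟨σ, hmono, 2/3, 4/3, by norm_num, by norm_num, ?_⟩
  intro s a
  exact riesz_of_almost_orthogonal (fun n => kt (σ n)) (fun n => hktnorm (σ n)) hg s a
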